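/- arXiv:1708.02128 — 4 statements merged into one kernel-verified Lean document; each statement's English description precedes it below -/
import Mathlib

section
/- Let π : X̃ → X be a surjective finite-fold covering map between compact Hausdorff spaces with X̃ connected, and suppose the covering is regular, i.e. the group G of deck transformations of π acts transitively on each fiber of π. Then there exist a finite index set I, nonnegative continuous functions ẽ_ι : X̃ → ℝ (ι ∈ I), and open subsets Ũ_ι ⊆ X̃ on which π is injective with the support of ẽ_ι contained in Ũ_ι, such that (1) ∑_{ι∈I} ∑_{g∈G} (ẽ_ι ∘ g)² = 1 identically on X̃, and (2) ẽ_ι · (ẽ_ι ∘ g) = 0 for every ι ∈ I and every deck transformation g ≠ id. -/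
open scoped BigOperators

private theorem aux_finsum_single {M α : Type*} [AddCommMonoid M] (f : α → M) (P : α → Prop)
    (hfin : {g | P g}.Finite) (g₀ : α) (hg₀ : P g₀)
    (h : ∀ g, P g → g ≠ g₀ → f g = 0) :
    (∑ᶠ (g) (_ : P g), f g) = f g₀ := by
  have h1 : (∑ᶠ (g) (_ : P g), f g) = ∑ᶠ g ∈ {g | P g}, f g := rfl
  rw [h1, finsum_mem_eq_finite_toFinset_sum f hfin]
  exact Finset.sum_eq_single_of_mem g₀ (hfin.mem_toFinset.mpr hg₀)
    fun b hb hbne => h b (hfin.mem_toFinset.mp hb) hbne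

/-- Let `π : X̃ → X` be a surjective finite-fold covering map between compact
Hausdorff spaces with `X̃` connected, and suppose the covering is regular: the deck
transformations (homeomorphisms `g` with `π ∘ g = π`) act transitively on each fiber.
Then there exist a finite index set `Fin n`, nonnegative continuous functions
`e ι : X̃ → ℝ` and open sets `U ι ⊆ X̃` on which `π` is injective, with
`tsupport (e ι) ⊆ U ι`, such that
`∑_{ι} ∑_{g deck} (e ι ∘ g)² = 1` on `X̃`, and `e ι * (e ι ∘ g) = 0` for every
nontrivial deck transformation `g`. -/
theorem regular_covering_partition_of_unity
    {E X : Type} [TopologicalSpace E] [TopologicalSpace X]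
    [CompactSpace E] [T2Space E] [ConnectedSpace E]
    [CompactSpace X] [T2Space X]
    (π : E → X) (hcov : IsCoveringMap π) (hsurj : Function.Surjective π)
    (hfib : ∀ x : X, (π ⁻¹' {x}).Finite)
    (hreg : ∀ x y : E, π x = π y → ∃ g : E ≃ₜ E, (π ∘ ⇑g = π) ∧ g x = y) :
    ∃ (n : ℕ) (e : Fin n → C(E, ℝ)) (U : Fin n → Set E),
      (∀ ι, IsOpen (U ι)) ∧
      (∀ ι, Set.InjOn π (U ι)) ∧
      (∀ ι, tsupport ⇑(e ι) ⊆ U ι) ∧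
      (∀ ι, ∀ x : E, 0 ≤ e ι x) ∧
      (∀ x : E, (∑ ι, ∑ᶠ (g : E ≃ₜ E) (_ : π ∘ ⇑g = π), (e ι (g x)) ^ 2) = 1) ∧
      (∀ ι, ∀ g : E ≃ₜ E, π ∘ ⇑g = π → g ≠ Homeomorph.refl E →
        ∀ x : E, e ι x * e ι (g x) = 0) := by
  classical
  -- two deck transformations agreeing at a point are equal
  have hcancel : ∀ (g g' : E ≃ₜ E), π ∘ ⇑g = π → π ∘ ⇑g' = π → ∀ z : E, g z = g' z → g = g' := by
    intro g g' hg hg' z hz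
    have h0 : ⇑g = ⇑g' :=
      hcov.eq_of_comp_eq g.continuous g'.continuous (by rw [hg, hg']) z hz
    exact Homeomorph.ext (congrFun h0)
  have free : ∀ g : E ≃ₜ E, π ∘ ⇑g = π → ∀ z : E, g z = z → g = Homeomorph.refl E := by
    intro g hg z hz
    exact hcancel g (Homeomorph.refl E) hg rfl z hz
  -- the deck group is finite
  obtain ⟨e₀⟩ : Nonempty E := inferInstance
  have Dfin : {g : E ≃ₜ E | π ∘ ⇑g = π}.Finite := by
    have himg : (fun g : E ≃ₜ E => g e₀) '' {g : E ≃ₜ E | π ∘ ⇑g = π} ⊆ π ⁻¹' {π e₀} := by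
      rintro - ⟨g, hg, rfl⟩
      exact congrFun hg e₀
    have hinj : Set.InjOn (fun g : E ≃ₜ E => g e₀) {g : E ≃ₜ E | π ∘ ⇑g = π} :=
      fun g hg g' hg' hpt => hcancel g g' hg hg' e₀ hpt
    exact Set.Finite.of_finite_image (Set.Finite.subset (hfib (π e₀)) himg) hinj
  -- trivializations and sheets
  haveI : ∀ x : X, Nonempty (π ⁻¹' {x}) := fun x => ⟨⟨Function.surjInv hsurj x, Function.surjInv_eq hsurj x⟩⟩
  let T : ∀ x : X, Bundle.Trivialization (π ⁻¹' {x}) π := fun x => (hcov x).toTrivialization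
  have hTB : ∀ x : X, x ∈ (T x).baseSet := fun x => (hcov x).mem_toTrivialization_baseSet
  let i : ∀ x : X, (π ⁻¹' {x} : Set E) :=
    fun x => ⟨Function.surjInv hsurj x, by simp [Function.surjInv_eq hsurj]⟩
  let V : X → Set E := fun x => (T x).source ∩ ⇑(T x) ⁻¹' (Prod.snd ⁻¹' {i x})
  have hVopen : ∀ x : X, IsOpen (V x) := by
    intro x
    haveI := (hcov x).1
    exact (T x).continuousOn_toFun.isOpen_inter_preimage (T x).open_source
      (continuous_snd.isOpen_preimage _ (isOpen_discrete _))
  have hVmem : ∀ x : X, ∀ z ∈ V x, ((T x) z).2 = i x := fun x z hz => hz.2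
  have hVinj : ∀ x : X, Set.InjOn π (V x) := by
    intro x z hz w hw hzw
    refine (T x).injOn hz.1 hw.1 (Prod.ext ?_ ?_)
    · simp only [Bundle.Trivialization.coe_coe]
      rw [(T x).coe_fst hz.1, (T x).coe_fst hw.1]; exact hzw
    · simp only [Bundle.Trivialization.coe_coe]
      rw [hVmem x z hz, hVmem x w hw]
  -- finite subcover
  have hcover : (Set.univ : Set X) ⊆ ⋃ x : X, (T x).baseSet := fun y _ =>
    Set.mem_iUnion.mpr ⟨y, hTB y⟩
  obtain ⟨t, ht⟩ := isCompact_univ.elim_finite_subcover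
    (fun x => (T x).baseSet) (fun x => (T x).open_baseSet) hcover
  have hcover' : (Set.univ : Set X) ⊆ ⋃ x : ↥t, (T ↑x).baseSet := by
    intro y hy
    obtain ⟨x, hxt, hyx⟩ := Set.mem_iUnion₂.mp (ht hy)
    exact Set.mem_iUnion.mpr ⟨⟨x, hxt⟩, hyx⟩
  -- subordinate partition of unity
  obtain ⟨ρ, hρ⟩ := PartitionOfUnity.exists_isSubordinate isClosed_univ
    (fun x : ↥t => (T ↑x).baseSet) (fun x => (T ↑x).open_baseSet) hcover'
  -- the bump functions upstairs
  let kf : ↥t → E → ℝ := fun x z => if z ∈ V ↑x then Real.sqrt (ρ x (π z)) else 0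
  have hkzero : ∀ (x : ↥t) (z : E), z ∉ V ↑x → kf x z = 0 := by
    intro x z hz; simp only [kf, if_neg hz]
  have hsupp : ∀ x : ↥t,
      Function.support (kf x) ⊆ V ↑x ∩ π ⁻¹' (tsupport ⇑(ρ x)) := by
    intro x w hw
    by_cases hwV : w ∈ V ↑x
    · refine ⟨hwV, subset_closure ?_⟩
      intro h0
      apply hw
      simp only [kf, if_pos hwV, h0, Real.sqrt_zero]
    · exact absurd (hkzero x w hwV) hw
  have hKclosed : ∀ x : ↥t, IsClosed (π ⁻¹' (tsupport ⇑(ρ x))) := fun x =>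
    (isClosed_tsupport _).preimage hcov.continuous
  have hKsrc : ∀ x : ↥t, π ⁻¹' (tsupport ⇑(ρ x)) ⊆ (T ↑x).source := by
    intro x z hz
    exact (T ↑x).mem_source.mpr (hρ x hz)
  -- tsupport of kf is inside the sheet
  have hts : ∀ x : ↥t, tsupport (kf x) ⊆ V ↑x := by
    intro x z hz
    have hzK : z ∈ π ⁻¹' (tsupport ⇑(ρ x)) :=
      closure_minimal ((hsupp x).trans Set.inter_subset_right) (hKclosed x) hz
    have hzsrc : z ∈ (T ↑x).source := hKsrc x hzK
    have hTc : ContinuousAt (fun w => ((T ↑x) w).2) z :=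
      continuous_snd.continuousAt.comp
        ((T ↑x).continuousOn_toFun.continuousAt ((T ↑x).open_source.mem_nhds hzsrc))
    have h2 : ((T ↑x) z).2 ∈ closure ((fun w => ((T ↑x) w).2) '' Function.support (kf x)) :=
      hTc.continuousWithinAt.mem_closure_image hz
    have himg : (fun w => ((T ↑x) w).2) '' Function.support (kf x) ⊆ {i ↑x} := by
      rintro - ⟨w, hw, rfl⟩
      exact hVmem _ w ((hsupp x) hw).1
    have h3 : ((T ↑x) z).2 = i ↑x := by
      have := (closure_mono himg).trans (closure_singleton (x := i ↑x)).subset h2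
      exact this
    exact ⟨hzsrc, h3⟩
  -- continuity of kf
  have hkcont : ∀ x : ↥t, Continuous (kf x) := by
    intro x
    rw [continuous_iff_continuousAt]
    intro z
    by_cases hzK : z ∈ π ⁻¹' (tsupport ⇑(ρ x))
    · have hzsrc : z ∈ (T ↑x).source := hKsrc x hzK
      by_cases hzV : z ∈ V ↑x
      · have hc : ContinuousAt (fun w => Real.sqrt (ρ x (π w))) z :=
          (Real.continuous_sqrt.comp ((ρ x).continuous.comp hcov.continuous)).continuousAt
        refine hc.congr ?_
        filter_upwards [(hVopen ↑x).mem_nhds hzV] with w hw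
        simp only [kf, if_pos hw]
      · haveI := (hcov (↑x : X)).1
        have hWopen : IsOpen ((T ↑x).source ∩ ⇑(T ↑x) ⁻¹' (Prod.snd ⁻¹' {i ↑x}ᶜ)) :=
          (T ↑x).continuousOn_toFun.isOpen_inter_preimage (T ↑x).open_source
            (continuous_snd.isOpen_preimage _ (isOpen_compl_iff.mpr isClosed_singleton))
        have hzW : z ∈ (T ↑x).source ∩ ⇑(T ↑x) ⁻¹' (Prod.snd ⁻¹' {i ↑x}ᶜ) :=
          ⟨hzsrc, fun hmem => hzV ⟨hzsrc, hmem⟩⟩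
        refine ContinuousAt.congr (continuousAt_const (y := (0:ℝ))) ?_
        filter_upwards [hWopen.mem_nhds hzW] with w hw
        exact (hkzero x w fun hwV => hw.2 hwV.2).symm
    · refine ContinuousAt.congr (continuousAt_const (y := (0:ℝ))) ?_
      filter_upwards [(hKclosed x).isOpen_compl.mem_nhds hzK] with w hw
      by_cases hwV : w ∈ V ↑x
      · have : ρ x (π w) = 0 := image_eq_zero_of_notMem_tsupport hw
        simp only [kf, if_pos hwV, this, Real.sqrt_zero]
      · exact (hkzero x w hwV).symm
  -- key fiberwise sum
  have hsum1 : ∀ (x : ↥t) (z : E),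
      (∑ᶠ (g : E ≃ₜ E) (_ : π ∘ ⇑g = π), (kf x (g z)) ^ 2) = ρ x (π z) := by
    intro x z
    have hfg : ∀ g : E ≃ₜ E, π ∘ ⇑g = π →
        (kf x (g z)) ^ 2 = if g z ∈ V ↑x then ρ x (π z) else 0 := by
      intro g hg
      have hπ : π (g z) = π z := congrFun hg z
      by_cases h : g z ∈ V ↑x
      · simp only [kf, if_pos h]
        rw [Real.sq_sqrt (ρ.nonneg x _), hπ]
      · simp only [kf, if_neg h, if_neg h]
        norm_num
    by_cases hc : ρ x (π z) = 0
    · have hrefl : π ∘ ⇑(Homeomorph.refl E) = π := rfl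
      rw [aux_finsum_single _ _ Dfin (Homeomorph.refl E) hrefl ?_]
      · rw [hfg _ hrefl]
        simp only [Homeomorph.refl_apply, hc]
        split <;> rfl
      · intro g hg _
        rw [hfg g hg, hc]
        split <;> rfl
    · have hzB : π z ∈ (T ↑x).baseSet := hρ x (subset_closure (Function.mem_support.mpr hc))
      have hwt : ((π z, i ↑x) : X × (π ⁻¹' {(↑x : X)} : Set E)) ∈ (T ↑x).target :=
        (T ↑x).mem_target.mpr hzB
      set w := (T ↑x).toPartialHomeomorph.symm (π z, i ↑x) with hw
      have hπw : π w = π z := (T ↑x).proj_symm_apply hwt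
      have hTw : (T ↑x) w = (π z, i ↑x) := (T ↑x).apply_symm_apply hwt
      have hwsrc : w ∈ (T ↑x).source := (T ↑x).mem_source.mpr (hπw ▸ hzB)
      have hwV : w ∈ V ↑x := ⟨hwsrc, by simp only [Set.mem_preimage, hTw]; rfl⟩
      obtain ⟨g₀, hg₀S, hg₀z⟩ := hreg z w hπw.symm
      have hg₀V : g₀ z ∈ V ↑x := by rw [hg₀z]; exact hwV
      rw [aux_finsum_single _ _ Dfin g₀ hg₀S ?_]
      · rw [hfg g₀ hg₀S, if_pos hg₀V]
      · intro g hg hne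
        rw [hfg g hg, if_neg]
        intro hgV
        apply hne
        have hπg : π (g z) = π (g₀ z) := by
          have a1 : π (g z) = π z := congrFun hg z
          have a2 : π (g₀ z) = π z := congrFun hg₀S z
          rw [a1, a2]
        exact hcancel g g₀ hg hg₀S z (hVinj ↑x hgV hg₀V hπg)
  -- assemble
  let σ : Fin t.card ≃ ↥t := t.equivFin.symm
  refine ⟨t.card, fun j => ⟨kf (σ j), hkcont (σ j)⟩, fun j => V ↑(σ j),
    fun j => hVopen _, fun j => hVinj _, fun j => hts (σ j), ?_, ?_, ?_⟩
  · intro j z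
    simp only [ContinuousMap.coe_mk, kf]
    split
    · exact Real.sqrt_nonneg _
    · exact le_refl 0
  · intro z
    have h1 : ∀ j : Fin t.card,
        (∑ᶠ (g : E ≃ₜ E) (_ : π ∘ ⇑g = π), (kf (σ j) (g z)) ^ 2) = ρ (σ j) (π z) :=
      fun j => hsum1 (σ j) z
    calc (∑ j, ∑ᶠ (g : E ≃ₜ E) (_ : π ∘ ⇑g = π), (kf (σ j) (g z)) ^ 2)
        = ∑ j, ρ (σ j) (π z) := Finset.sum_congr rfl fun j _ => h1 j
      _ = ∑ x : ↥t, ρ x (π z) := Equiv.sum_comp σ (fun x => ρ x (π z))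
      _ = ∑ᶠ x : ↥t, ρ x (π z) := (finsum_eq_sum_of_fintype _).symm
      _ = 1 := ρ.sum_eq_one (Set.mem_univ _)
  · intro j g hg hgne z
    by_contra h
    obtain ⟨h1, h2⟩ := mul_ne_zero_iff.mp h
    simp only [ContinuousMap.coe_mk] at h1 h2
    have hzV : z ∈ V ↑(σ j) := by
      by_contra hh; exact h1 (hkzero _ z hh)
    have hgzV : g z ∈ V ↑(σ j) := by
      by_contra hh; exact h2 (hkzero _ (g z) hh)
    exact hgne (free g hg z (hVinj _ hgzV hzV (congrFun hg z)))
end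

section
/- Let π : X̃ → X be a continuous map of topological spaces, let U ⊆ X be open, and let Ũ ⊆ π⁻¹(U) be a subset that is open in X̃, closed in the subspace π⁻¹(U), and mapped homeomorphically onto U by π. Let e : X → ℝ be a continuous function whose support is a compact subset of U. Then the function ẽ : X̃ → ℝ defined by ẽ(x̃) = e(π(x̃)) for x̃ ∈ Ũ and ẽ(x̃) = 0 for x̃ ∉ Ũ is continuous. -/
/-- Let `π : X̃ → X` be continuous, `U ⊆ X` open, and let `V ⊆ π⁻¹(U)` be a
subset that is open in `X̃`, closed in the subspace `π⁻¹(U)`, and mapped homeomorphically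
onto `U` by `π`.  Let `e : X → ℝ` be continuous with compact support contained in `U`.
Then the function `x̃ ↦ e (π x̃)` on `V`, extended by `0` outside `V` (i.e. the indicator
`V.indicator (e ∘ π)`), is continuous. -/
theorem indicator_pullback_continuous
    {E X : Type} [TopologicalSpace E] [TopologicalSpace X]
    (π : E → X) (hπ : Continuous π)
    (U : Set X) (hU : IsOpen U)
    (V : Set E) (hVsub : V ⊆ π ⁻¹' U) (hVopen : IsOpen V)
    (hVclosed : IsClosed {x : π ⁻¹' U | (x : E) ∈ V})
    (hmaps : Set.MapsTo π V U)
    (hhomeo : IsHomeomorph (Set.MapsTo.restrict π V U hmaps))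
    (e : C(X, ℝ)) (hcomp : HasCompactSupport ⇑e) (hsupp : tsupport ⇑e ⊆ U) :
    Continuous (V.indicator fun x => e (π x)) := by
  rw [continuous_iff_continuousAt]
  intro x
  by_cases hx : x ∈ V
  · exact ((e.continuous.comp hπ).continuousAt).congr
      (Filter.eventuallyEq_of_mem (hVopen.mem_nhds hx)
        (fun y hy => (Set.indicator_of_mem hy _).symm))
  · by_cases hxU : π x ∈ tsupport ⇑e
    · -- then x ∈ π⁻¹ U, use closedness of V in π⁻¹ U
      have hxU' : x ∈ π ⁻¹' U := hsupp hxU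
      obtain ⟨O, hO, hOeq⟩ := isOpen_induced_iff.mp hVclosed.isOpen_compl
      have hxO : x ∈ O ∩ π ⁻¹' U := by
        constructor
        · have : (⟨x, hxU'⟩ : π ⁻¹' U) ∈ {x : π ⁻¹' U | (x : E) ∈ V}ᶜ := hx
          rw [← hOeq] at this
          exact this
        · exact hxU'
      refine (continuousAt_const : ContinuousAt (fun _ : E => (0:ℝ)) x).congr (Filter.eventuallyEq_of_mem
        ((hO.inter (hU.preimage hπ)).mem_nhds hxO) (fun y hy => ?_))
      have hyV : y ∉ V := by
        intro hyV
        have : (⟨y, hy.2⟩ : π ⁻¹' U) ∈ {x : π ⁻¹' U | (x : E) ∈ V}ᶜ := by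
          rw [← hOeq]; exact hy.1
        exact this hyV
      simp [Set.indicator_of_notMem hyV]
    · -- e ∘ π vanishes near x
      have hop : IsOpen (π ⁻¹' (tsupport ⇑e)ᶜ) :=
        (isClosed_tsupport _).isOpen_compl.preimage hπ
      refine (continuousAt_const : ContinuousAt (fun _ : E => (0:ℝ)) x).congr (Filter.eventuallyEq_of_mem
        (hop.mem_nhds hxU) (fun y hy => ?_))
      by_cases hyV : y ∈ V
      · simp [Set.indicator_of_mem hyV, image_eq_zero_of_notMem_tsupport hy]
      · simp [Set.indicator_of_notMem hyV]
end

section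
/- Let π : X̃ → X be a surjective finite-fold covering map between compact Hausdorff spaces with X̃ connected, and suppose the covering is regular, i.e. the group of deck transformations of π acts transitively on each fiber of π. Then C(X̃,ℂ), regarded as a module over C(X,ℂ) via the pullback *-homomorphism π* : C(X,ℂ) → C(X̃,ℂ), is a finitely generated projective C(X,ℂ)-module. -/
theorem aux_fg_proj {R M : Type*} [CommRing R] [AddCommGroup M] [Module R M]
    {K : Type*} [Fintype K] (u : K → M) (w : K → (M →ₗ[R] R))
    (h : ∀ f : M, ∑ k, w k f • u k = f) :
    Module.Finite R M ∧ Module.Projective R M := by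
  classical
  constructor
  · refine ⟨⟨Finset.image u Finset.univ, ?_⟩⟩
    rw [eq_top_iff]
    intro f _
    rw [← h f]
    exact Submodule.sum_mem _ fun k _ => Submodule.smul_mem _ _
      (Submodule.subset_span (Finset.mem_coe.mpr (Finset.mem_image_of_mem u (Finset.mem_univ k))))
  · refine Module.Projective.of_split (M := K → R) (LinearMap.pi w)
      (∑ k : K, (LinearMap.proj k : (K → R) →ₗ[R] R).smulRight (u k)) ?_
    ext f
    simp [LinearMap.pi_apply, h f]


/-- Let `π : X̃ → X` be a surjective finite-fold covering map between compact
Hausdorff spaces with `X̃` connected, and suppose the covering is regular (the deck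
transformations act transitively on each fiber).  Then `C(X̃, ℂ)`, regarded as a module over
`C(X, ℂ)` via the pullback ring homomorphism `φ : C(X, ℂ) →+* C(X̃, ℂ)`, `f ↦ f ∘ π`, is a
finitely generated projective `C(X, ℂ)`-module. -/
theorem regular_covering_gives_fg_projective_module
    {E X : Type} [TopologicalSpace E] [TopologicalSpace X]
    [CompactSpace E] [T2Space E] [ConnectedSpace E]
    [CompactSpace X] [T2Space X]
    (π : C(E, X)) (hcov : IsCoveringMap π) (hsurj : Function.Surjective π)
    (hfib : ∀ x : X, (π ⁻¹' {x}).Finite)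
    (hreg : ∀ x y : E, π x = π y → ∃ g : E ≃ₜ E, (⇑π ∘ ⇑g = ⇑π) ∧ g x = y)
    (φ : C(X, ℂ) →+* C(E, ℂ)) (hφ : ∀ f : C(X, ℂ), φ f = f.comp π) :
    @Module.Finite C(X, ℂ) C(E, ℂ) _ _ (Module.compHom C(E, ℂ) φ) ∧
      @Module.Projective C(X, ℂ) _ C(E, ℂ) _ (Module.compHom C(E, ℂ) φ) := by
  classical
  letI : Module C(X, ℂ) C(E, ℂ) := Module.compHom C(E, ℂ) φ
  have hsmul : ∀ (a : C(X, ℂ)) (f : C(E, ℂ)), a • f = φ a * f := fun a f => rfl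
  have hval : ∀ (g : C(X, ℂ)) (e : E), φ g e = g (π e) := by
    intro g e; rw [hφ]; rfl
  -- trivializations
  haveI : ∀ x : X, Nonempty ↥(π ⁻¹' {x}) := fun x => (hsurj x).elim fun e he => ⟨⟨e, he⟩⟩
  set T : ∀ x : X, Bundle.Trivialization (π ⁻¹' {x}) ⇑π := fun x => (hcov x).toTrivialization with hTdef
  have hT : ∀ x, x ∈ (T x).baseSet := fun x => (hcov x).mem_toTrivialization_baseSet
  haveI hdisc : ∀ x : X, DiscreteTopology ↥(π ⁻¹' {x}) := fun x => (hcov x).1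
  -- finite subcover
  obtain ⟨s, hs⟩ := IsCompact.elim_finite_subcover isCompact_univ
    (fun x => (T x).baseSet) (fun x => (T x).open_baseSet)
    (fun x _ => Set.mem_iUnion.mpr ⟨x, hT x⟩)
  -- partition of unity
  obtain ⟨ρ, hρ⟩ := PartitionOfUnity.exists_isSubordinate (s := (Set.univ : Set X))
    isClosed_univ (fun i : ↥s => (T (i : X)).baseSet) (fun i => (T (i : X)).open_baseSet)
    (by intro x hx
        obtain ⟨y, hy⟩ := Set.mem_iUnion₂.mp (hs (Set.mem_univ x))
        exact Set.mem_iUnion.mpr ⟨⟨y, hy.1⟩, hy.2⟩)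
  have hzero : ∀ (i : ↥s) (x : X), x ∉ (T (i : X)).baseSet → ρ i x = 0 := fun i x hx =>
    image_eq_zero_of_notMem_tsupport (fun h => hx (hρ i h))
  have hsum : ∀ x : X, ∑ i : ↥s, ρ i x = 1 := by
    intro x
    rw [← finsum_eq_sum_of_fintype]
    exact ρ.sum_eq_one (Set.mem_univ x)
  haveI : ∀ i : ↥s, Fintype ↥(π ⁻¹' {(i : X)}) := fun i => (hfib _).fintype
  letI K := (i : ↥s) × ↥(π ⁻¹' {(i : X)})
  letI : Fintype K := inferInstance
  -- the generator functions u
  have uCont : ∀ k : K, Continuous (fun e : E =>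
      if e ∈ (T (k.1 : X)).source ∧ ((T (k.1 : X)) e).2 = k.2
      then (Real.sqrt (ρ k.1 (π e)) : ℂ) else 0) := by
    intro k
    rw [continuous_iff_continuousAt]
    intro e
    by_cases he : e ∈ (T (k.1 : X)).source
    · by_cases hj : ((T (k.1 : X)) e).2 = k.2
      · have hV : IsOpen ((T (k.1 : X)).source ∩
            ⇑(T (k.1 : X)) ⁻¹' (Set.univ ×ˢ {k.2})) :=
          (T (k.1 : X)).toOpenPartialHomeomorph.continuousOn.isOpen_inter_preimage
            (T (k.1 : X)).open_source (isOpen_univ.prod (isOpen_discrete _))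
        refine ContinuousAt.congr ((Complex.continuous_ofReal.comp
          (Real.continuous_sqrt.comp ((ρ k.1).continuous.comp π.continuous))).continuousAt) ?_
        filter_upwards [hV.mem_nhds ⟨he, Set.mem_prod.mpr ⟨trivial, hj⟩⟩] with e' he'
        have h2 := he'.2
        rw [Set.mem_preimage, Set.mem_prod, Set.mem_singleton_iff] at h2
        rw [if_pos ⟨he'.1, h2.2⟩]
        rfl
      · have hV : IsOpen ((T (k.1 : X)).source ∩
            ⇑(T (k.1 : X)) ⁻¹' (Set.univ ×ˢ ({k.2}ᶜ))) :=
          (T (k.1 : X)).toOpenPartialHomeomorph.continuousOn.isOpen_inter_preimage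
            (T (k.1 : X)).open_source (isOpen_univ.prod (isOpen_discrete _))
        refine ContinuousAt.congr (continuousAt_const (y := (0 : ℂ))) ?_
        filter_upwards [hV.mem_nhds ⟨he, Set.mem_prod.mpr ⟨trivial, hj⟩⟩] with e' he'
        have h2 := he'.2
        rw [Set.mem_preimage, Set.mem_prod, Set.mem_compl_iff, Set.mem_singleton_iff] at h2
        rw [if_neg (fun hc => h2.2 hc.2)]
    · have hB : IsOpen (⇑π ⁻¹' (tsupport (ρ k.1))ᶜ) :=
        (isClosed_tsupport _).isOpen_compl.preimage π.continuous
      have heB : e ∈ ⇑π ⁻¹' (tsupport (ρ k.1))ᶜ := by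
        intro hmem
        exact he ((T (k.1 : X)).mem_source.mpr (hρ k.1 hmem))
      refine ContinuousAt.congr (continuousAt_const (y := (0 : ℂ))) ?_
      filter_upwards [hB.mem_nhds heB] with e' he'
      have : ρ k.1 (π e') = 0 := image_eq_zero_of_notMem_tsupport he'
      split
      · rw [this, Real.sqrt_zero, Complex.ofReal_zero]
      · rfl
  set u : K → C(E, ℂ) := fun k => ⟨_, uCont k⟩ with hu
  -- the coefficient functions w
  have wCont : ∀ (k : K) (f : C(E, ℂ)), Continuous (fun x : X =>
      if x ∈ (T (k.1 : X)).baseSet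
      then (Real.sqrt (ρ k.1 x) : ℂ) *
        f ((T (k.1 : X)).toOpenPartialHomeomorph.symm (x, k.2)) else 0) := by
    intro k f
    rw [continuous_iff_continuousAt]
    intro x
    by_cases hx : x ∈ (T (k.1 : X)).baseSet
    · have hsec : ContinuousOn
          (fun x : X => (T (k.1 : X)).toOpenPartialHomeomorph.symm (x, k.2))
          (T (k.1 : X)).baseSet := by
        refine (T (k.1 : X)).toOpenPartialHomeomorph.continuousOn_symm.comp
          ((continuous_id.prodMk continuous_const).continuousOn) ?_
        intro y hy
        rw [(T (k.1 : X)).target_eq]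
        exact ⟨hy, trivial⟩
      have hg : ContinuousAt (fun x : X => (Real.sqrt (ρ k.1 x) : ℂ) *
          f ((T (k.1 : X)).toOpenPartialHomeomorph.symm (x, k.2))) x := by
        refine ContinuousAt.mul ?_ ?_
        · exact (Complex.continuous_ofReal.comp
            (Real.continuous_sqrt.comp (ρ k.1).continuous)).continuousAt
        · exact f.continuous.continuousAt.comp
            (hsec.continuousAt ((T (k.1 : X)).open_baseSet.mem_nhds hx))
      refine ContinuousAt.congr hg ?_
      filter_upwards [(T (k.1 : X)).open_baseSet.mem_nhds hx] with y hy
      rw [if_pos hy]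
    · have hB : IsOpen ((tsupport (ρ k.1))ᶜ) := (isClosed_tsupport _).isOpen_compl
      have hxB : x ∈ (tsupport (ρ k.1))ᶜ := fun hmem => hx (hρ k.1 hmem)
      refine ContinuousAt.congr (continuousAt_const (y := (0 : ℂ))) ?_
      filter_upwards [hB.mem_nhds hxB] with y hy
      have : ρ k.1 y = 0 := image_eq_zero_of_notMem_tsupport hy
      split
      · rw [this, Real.sqrt_zero, Complex.ofReal_zero, zero_mul]
      · rfl
  set W : K → C(E, ℂ) → C(X, ℂ) := fun k f => ⟨_, wCont k f⟩ with hW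
  -- W is linear
  have Wadd : ∀ k f g, W k (f + g) = W k f + W k g := by
    intro k f g
    ext x
    simp only [hW, ContinuousMap.coe_mk, ContinuousMap.add_apply]
    split
    · ring
    · rw [add_zero]
  have Wsmul : ∀ (k) (a : C(X, ℂ)) (f), W k (a • f) = a * W k f := by
    intro k a f
    ext x
    simp only [hW, ContinuousMap.coe_mk, ContinuousMap.mul_apply]
    split
    · rename_i hx
      rw [hsmul, ContinuousMap.mul_apply, hval]
      rw [(T (k.1 : X)).proj_symm_apply' hx]
      ring
    · rw [mul_zero]
  set w : K → (C(E, ℂ) →ₗ[C(X, ℂ)] C(X, ℂ)) := fun k =>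
    { toFun := W k
      map_add' := Wadd k
      map_smul' := Wsmul k } with hw
  -- the key reproducing identity
  have hkey : ∀ f : C(E, ℂ), ∑ k, w k f • u k = f := by
    intro f
    ext e
    have hLHS : (∑ k, w k f • u k) e = ∑ k : K, (W k f) (π e) * u k e := by
      rw [show (∑ k, w k f • u k) = ∑ k, φ (W k f) * u k from rfl]
      simp only [ContinuousMap.sum_apply, ContinuousMap.mul_apply]
      exact Finset.sum_congr rfl fun k _ => by rw [hval]
    rw [hLHS, ← Finset.univ_sigma_univ, Finset.sum_sigma]
    have hinner : ∀ i : ↥s,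
        (∑ j : ↥(π ⁻¹' {(i : X)}), (W ⟨i, j⟩ f) (π e) * u ⟨i, j⟩ e)
          = (ρ i (π e) : ℂ) * f e := by
      intro i
      by_cases he : e ∈ (T (i : X)).source
      · have hbase : π e ∈ (T (i : X)).baseSet := (T (i : X)).mem_source.mp he
        have hterm : ∀ j : ↥(π ⁻¹' {(i : X)}),
            (W ⟨i, j⟩ f) (π e) * u ⟨i, j⟩ e
              = if j = ((T (i : X)) e).2 then (ρ i (π e) : ℂ) * f e else 0 := by
          intro j
          by_cases hj : j = ((T (i : X)) e).2
          · subst hj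
            rw [if_pos rfl]
            simp only [hW, hu, ContinuousMap.coe_mk, eq_self_iff_true, and_true]
            rw [if_pos hbase, if_pos he]
            have hte : (T (i : X)) e = (π e, ((T (i : X)) e).2) :=
              Prod.ext ((T (i : X)).coe_fst he) rfl
            have hsym : (T (i : X)).toOpenPartialHomeomorph.symm (π e, ((T (i : X)) e).2) = e := by
              rw [← hte]
              exact (T (i : X)).toOpenPartialHomeomorph.left_inv he
            rw [hsym]
            rw [mul_comm ((Real.sqrt (ρ i (π e)) : ℂ)) (f e), mul_assoc, ← Complex.ofReal_mul,
              Real.mul_self_sqrt (ρ.nonneg i (π e)), mul_comm]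
          · rw [if_neg hj]
            simp only [hW, hu, ContinuousMap.coe_mk]
            rw [if_neg (fun hc : e ∈ (T (i : X)).source ∧ ((T (i : X)) e).2 = j =>
              hj hc.2.symm), mul_zero]
        rw [Finset.sum_congr rfl fun j _ => hterm j]
        rw [Finset.sum_ite_eq' Finset.univ (((T (i : X)) e).2)
          (fun _ => (ρ i (π e) : ℂ) * f e)]
        rw [if_pos (Finset.mem_univ _)]
      · have hz : ρ i (π e) = 0 := hzero i (π e) (fun hb => he ((T (i : X)).mem_source.mpr hb))
        have hterm : ∀ j : ↥(π ⁻¹' {(i : X)}),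
            (W ⟨i, j⟩ f) (π e) * u ⟨i, j⟩ e = 0 := by
          intro j
          simp only [hu, ContinuousMap.coe_mk]
          rw [if_neg (fun hc => he hc.1), mul_zero]
        rw [Finset.sum_congr rfl fun j _ => hterm j, Finset.sum_const, smul_zero,
          hz, Complex.ofReal_zero, zero_mul]
    rw [Finset.sum_congr rfl fun i _ => hinner i, ← Finset.sum_mul]
    rw [← Complex.ofReal_sum, hsum (π e), Complex.ofReal_one, one_mul]
  exact aux_fg_proj u w hkey
end

section
/- Let p, q be natural numbers and let b : ℝ^p × ℝ^q → ℝ be a continuous function vanishing at infinity with 0 ≤ b(x,y) ≤ 1 for all (x,y). Then there exist a continuous function b' : ℝ^q → ℝ vanishing at infinity with 0 ≤ b' ≤ 1 and a continuous function b'' : ℝ^p × ℝ^q → ℝ vanishing at infinity with 0 ≤ b'' ≤ 1 such that b(x,y) = b'(y) · b''(x,y) for all (x,y) ∈ ℝ^p × ℝ^q. -/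
open ZeroAtInfty

open Filter Set Topology

section Aux

variable {X Y : Type*} [TopologicalSpace X] [TopologicalSpace Y]

/-- Smallness of a `C₀` function outside a compact set. -/
lemma c0_aux_small (b : C₀(X × Y, ℝ)) {ε : ℝ} (hε : 0 < ε) :
    ∃ K : Set (X × Y), IsCompact K ∧ ∀ z ∉ K, |b z| < ε := by
  have h := (Filter.hasBasis_cocompact.tendsto_iff Metric.nhds_basis_ball).mp
    (zero_at_infty b) ε hε
  obtain ⟨K, hK, h⟩ := h
  refine ⟨K, hK, fun z hz => ?_⟩
  have := h z hz
  simpa [Real.dist_eq] using this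

/-- There is a nonnegative `C₀` function of the second variable dominating `b`. -/
lemma c0_aux_dominating [Nonempty X] (b : C₀(X × Y, ℝ))
    (hb : ∀ z : X × Y, 0 ≤ b z ∧ b z ≤ 1) :
    ∃ g : C₀(Y, ℝ), (∀ y, 0 ≤ g y ∧ g y ≤ 1) ∧ ∀ z : X × Y, b z ≤ g z.2 := by
  obtain ⟨x₀⟩ := ‹Nonempty X›
  set G : Y → ℝ := fun y => ⨆ x, b (x, y) with hG
  have bdd : ∀ y : Y, BddAbove (range fun x => b (x, y)) := by
    intro y
    refine ⟨1, ?_⟩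
    rintro r ⟨x, rfl⟩
    exact (hb _).2
  have hle : ∀ z : X × Y, b z ≤ G z.2 := by
    intro z
    have := le_ciSup (bdd z.2) z.1
    simpa using this
  have hG0 : ∀ y, 0 ≤ G y := fun y => (hb (x₀, y)).1.trans (le_ciSup (bdd y) x₀)
  have hG1 : ∀ y, G y ≤ 1 := fun y => ciSup_le fun x => (hb _).2
  -- continuity of G
  have hGc : Continuous G := by
    apply continuous_of_uniform_approx_of_continuous
    intro u hu
    obtain ⟨ε, hε, hεu⟩ := Metric.mem_uniformity_dist.mp hu
    obtain ⟨K, hK, hKs⟩ := c0_aux_small b (half_pos hε)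
    set K₁ : Set X := insert x₀ (Prod.fst '' K) with hK₁def
    have hK₁ : IsCompact K₁ := (hK.image continuous_fst).insert x₀
    set F : Y → ℝ := fun y => sSup ((fun x => b (x, y)) '' K₁) with hF
    have hFc : Continuous F := by
      have : Continuous (↿(fun (y : Y) (x : X) => b (x, y))) :=
        b.continuous.comp (continuous_snd.prodMk continuous_fst)
      exact hK₁.continuous_sSup this
    refine ⟨F, hFc, fun y => ?_⟩
    have hbddim : BddAbove ((fun x => b (x, y)) '' K₁) := by
      refine ⟨1, ?_⟩
      rintro r ⟨x, -, rfl⟩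
      exact (hb _).2
    have himne : ((fun x => b (x, y)) '' K₁).Nonempty :=
      ⟨b (x₀, y), mem_image_of_mem _ (mem_insert x₀ _)⟩
    have hFle : F y ≤ G y := by
      refine csSup_le himne ?_
      rintro r ⟨x, -, rfl⟩
      exact le_ciSup (bdd y) x
    have hF0 : 0 ≤ F y :=
      (hb (x₀, y)).1.trans (le_csSup hbddim (mem_image_of_mem _ (mem_insert x₀ _)))
    have hGle : G y ≤ F y + ε / 2 := by
      refine ciSup_le fun x => ?_
      by_cases hxK : (x, y) ∈ K
      · have hx₁ : x ∈ K₁ := mem_insert_of_mem _ ⟨(x, y), hxK, rfl⟩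
        have : b (x, y) ≤ F y := le_csSup hbddim (mem_image_of_mem _ hx₁)
        linarith [half_pos hε]
      · have : b (x, y) < ε / 2 := (le_abs_self _).trans_lt (hKs _ hxK)
        linarith
    refine hεu ?_
    rw [Real.dist_eq, abs_lt]
    constructor <;> linarith [half_pos hε]
  -- zero at infinity
  have hGz : Tendsto G (cocompact Y) (𝓝 0) := by
    rw [Filter.hasBasis_cocompact.tendsto_iff Metric.nhds_basis_ball]
    intro ε hε
    obtain ⟨K, hK, hKs⟩ := c0_aux_small b (half_pos hε)
    refine ⟨Prod.snd '' K, hK.image continuous_snd, fun y hy => ?_⟩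
    have hle' : G y ≤ ε / 2 := by
      refine ciSup_le fun x => ?_
      have hxK : (x, y) ∉ K := fun h => hy ⟨(x, y), h, rfl⟩
      exact (le_abs_self _).trans (hKs _ hxK).le
    rw [Metric.mem_ball, Real.dist_eq, sub_zero, abs_of_nonneg (hG0 y)]
    linarith
  exact ⟨⟨⟨G, hGc⟩, hGz⟩, fun y => ⟨hG0 y, hG1 y⟩, hle⟩

end Aux

/-- Let `b : ℝᵖ × ℝᵠ → ℝ` be a continuous function vanishing at infinity
with `0 ≤ b ≤ 1`.  Then there exist continuous functions `b' : ℝᵠ → ℝ` and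
`b'' : ℝᵖ × ℝᵠ → ℝ`, both vanishing at infinity and with values in `[0,1]`, such that
`b (x, y) = b' y * b'' (x, y)` for all `(x, y)`. -/
theorem c0_factorization_through_transversal
    (p q : ℕ) (b : C₀((Fin p → ℝ) × (Fin q → ℝ), ℝ))
    (hb : ∀ z : (Fin p → ℝ) × (Fin q → ℝ), 0 ≤ b z ∧ b z ≤ 1) :
    ∃ (b' : C₀((Fin q → ℝ), ℝ)) (b'' : C₀((Fin p → ℝ) × (Fin q → ℝ), ℝ)),
      (∀ y : Fin q → ℝ, 0 ≤ b' y ∧ b' y ≤ 1) ∧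
      (∀ z : (Fin p → ℝ) × (Fin q → ℝ), 0 ≤ b'' z ∧ b'' z ≤ 1) ∧
      ∀ z : (Fin p → ℝ) × (Fin q → ℝ), b z = b' z.2 * b'' z := by
  obtain ⟨g, hgb, hgle⟩ := c0_aux_dominating b hb
  -- b' = sqrt ∘ g
  have hsqrt0 : Tendsto Real.sqrt (𝓝 0) (𝓝 0) :=
    Real.continuous_sqrt.tendsto' 0 0 Real.sqrt_zero
  set B' : C₀((Fin q → ℝ), ℝ) :=
    ⟨⟨fun y => Real.sqrt (g y), Real.continuous_sqrt.comp g.continuous⟩,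
      hsqrt0.comp (zero_at_infty g)⟩ with hB'
  -- b'' = b / sqrt (g ∘ snd)
  set B''f : (Fin p → ℝ) × (Fin q → ℝ) → ℝ := fun z => b z / Real.sqrt (g z.2) with hB''f
  have hb''0 : ∀ z, 0 ≤ B''f z := fun z => div_nonneg (hb z).1 (Real.sqrt_nonneg _)
  have hb''le : ∀ z, B''f z ≤ Real.sqrt (b z) := by
    intro z
    by_cases hgz : g z.2 = 0
    · have hbz : b z = 0 := le_antisymm ((hgle z).trans hgz.le) (hb z).1
      simp [hB''f, hbz]
    · have hgpos : 0 < g z.2 := lt_of_le_of_ne (hgb z.2).1 (Ne.symm hgz)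
      have hspos : 0 < Real.sqrt (g z.2) := Real.sqrt_pos.mpr hgpos
      rw [div_le_iff₀ hspos]
      calc b z = Real.sqrt (b z) * Real.sqrt (b z) := (Real.mul_self_sqrt (hb z).1).symm
        _ ≤ Real.sqrt (b z) * Real.sqrt (g z.2) :=
          mul_le_mul_of_nonneg_left (Real.sqrt_le_sqrt (hgle z)) (Real.sqrt_nonneg _)
  have hb''c : Continuous B''f := by
    rw [continuous_iff_continuousAt]
    intro z
    by_cases hgz : g z.2 = 0
    · have hbz : b z = 0 := le_antisymm ((hgle z).trans hgz.le) (hb z).1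
      have hB''z : B''f z = 0 := by simp [hB''f, hbz]
      rw [ContinuousAt, hB''z]
      have hsb : Tendsto (fun w => Real.sqrt (b w)) (𝓝 z) (𝓝 0) := by
        have := (Real.continuous_sqrt.comp b.continuous).tendsto z
        simpa [hbz, Function.comp_def] using this
      exact squeeze_zero hb''0 hb''le hsb
    · have hgpos : 0 < g z.2 := lt_of_le_of_ne (hgb z.2).1 (Ne.symm hgz)
      have hsne : Real.sqrt (g z.2) ≠ 0 := (Real.sqrt_pos.mpr hgpos).ne'
      exact (b.continuous.continuousAt).div
        ((Real.continuous_sqrt.comp (g.continuous.comp continuous_snd)).continuousAt) hsne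
  have hb''z : Tendsto B''f (cocompact _) (𝓝 0) := by
    refine squeeze_zero hb''0 hb''le ?_
    exact hsqrt0.comp (zero_at_infty b)
  set B'' : C₀((Fin p → ℝ) × (Fin q → ℝ), ℝ) := ⟨⟨B''f, hb''c⟩, hb''z⟩ with hB''
  refine ⟨B', B'', fun y => ⟨Real.sqrt_nonneg _, Real.sqrt_le_one.mpr (hgb y).2⟩,
    fun z => ⟨hb''0 z, (hb''le z).trans (Real.sqrt_le_one.mpr (hb z).2)⟩, fun z => ?_⟩
  show b z = Real.sqrt (g z.2) * (b z / Real.sqrt (g z.2))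
  by_cases hgz : g z.2 = 0
  · have hbz : b z = 0 := le_antisymm ((hgle z).trans hgz.le) (hb z).1
    simp [hbz]
  · have hgpos : 0 < g z.2 := lt_of_le_of_ne (hgb z.2).1 (Ne.symm hgz)
    have hsne : Real.sqrt (g z.2) ≠ 0 := (Real.sqrt_pos.mpr hgpos).ne'
    rw [mul_comm, div_mul_cancel₀ _ hsne]
end
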